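/- arXiv:2203.04380 — 4 statements merged into one kernel-verified Lean document; each statement's English description precedes it below -/
import Mathlib

section
/- For every real t > 0, the function (x₁,x₂) ↦ x₂·e^{−t(2x₁+x₂)} is integrable on P with respect to Lebesgue measure on ℝ², and ∫_P x₂·e^{−t(2x₁+x₂)} d(x₁,x₂) = 0. -/
open MeasureTheory

/-- The moment polytope `P_{-K_M}` of the blowup of `ℂ×ℙ¹` at a torus-fixed point:
`P = {(x₁,x₂) ∈ ℝ² : x₁ ≥ −1, −1 ≤ x₂ ≤ 1, x₁ + x₂ ≥ −1}`. -/
def momentPolytope : Set (ℝ × ℝ) :=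
  {p | -1 ≤ p.1 ∧ -1 ≤ p.2 ∧ p.2 ≤ 1 ∧ -1 ≤ p.1 + p.2}

/-- The involution `σ(x₁,x₂) = (x₁+x₂, −x₂)` as a measurable equivalence. -/
noncomputable def sigmaEquiv : (ℝ × ℝ) ≃ᵐ (ℝ × ℝ) :=
  Homeomorph.toMeasurableEquiv
    { toFun := fun p => (p.1 + p.2, -p.2)
      invFun := fun p => (p.1 + p.2, -p.2)
      left_inv := fun p => by simp
      right_inv := fun p => by simp
      continuous_toFun := by continuity
      continuous_invFun := by continuity }

lemma sigma_measurePreserving :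
    MeasurePreserving (fun p : ℝ × ℝ => (p.1 + p.2, -p.2)) volume volume := by
  have h1 : MeasurePreserving (fun p : ℝ × ℝ => (p.1 + p.2, p.2))
      ((volume : Measure ℝ).prod volume) ((volume : Measure ℝ).prod volume) :=
    measurePreserving_add_prod volume volume
  have h2 : MeasurePreserving (Prod.map (id : ℝ → ℝ) (fun x : ℝ => -x))
      ((volume : Measure ℝ).prod volume) ((volume : Measure ℝ).prod volume) :=
    (MeasurePreserving.id volume).prod (Measure.measurePreserving_neg volume)
  have := h2.comp h1
  rw [← Measure.volume_eq_prod] at this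
  exact this

lemma momentPolytope_measurable : MeasurableSet momentPolytope := by
  have h1 : MeasurableSet {p : ℝ × ℝ | -1 ≤ p.1} :=
    measurableSet_le measurable_const measurable_fst
  have h2 : MeasurableSet {p : ℝ × ℝ | -1 ≤ p.2} :=
    measurableSet_le measurable_const measurable_snd
  have h3 : MeasurableSet {p : ℝ × ℝ | p.2 ≤ 1} :=
    measurableSet_le measurable_snd measurable_const
  have h4 : MeasurableSet {p : ℝ × ℝ | -1 ≤ p.1 + p.2} :=
    measurableSet_le measurable_const (measurable_fst.add measurable_snd)
  have : momentPolytope = {p : ℝ × ℝ | -1 ≤ p.1} ∩ ({p : ℝ × ℝ | -1 ≤ p.2} ∩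
      ({p : ℝ × ℝ | p.2 ≤ 1} ∩ {p : ℝ × ℝ | -1 ≤ p.1 + p.2})) := by
    ext p; simp [momentPolytope, Set.mem_setOf_eq, and_assoc]
  rw [this]
  exact h1.inter (h2.inter (h3.inter h4))

lemma sigma_preimage : (fun p : ℝ × ℝ => (p.1 + p.2, -p.2)) ⁻¹' momentPolytope = momentPolytope := by
  ext ⟨x, y⟩
  simp only [Set.mem_preimage, momentPolytope, Set.mem_setOf_eq]
  constructor
  · rintro ⟨h1, h2, h3, h4⟩
    refine ⟨by linarith, by linarith, by linarith, by linarith⟩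
  · rintro ⟨h1, h2, h3, h4⟩
    refine ⟨by linarith, by linarith, by linarith, by linarith⟩

/-- For every `t > 0`, the function `(x₁,x₂) ↦ x₂·e^{−t(2x₁+x₂)}` is integrable on `P`
with respect to Lebesgue measure on `ℝ²`, and its integral over `P` vanishes. -/
theorem stmt_3 (t : ℝ) (ht : 0 < t) :
    IntegrableOn (fun p : ℝ × ℝ => p.2 * Real.exp (-(t * (2 * p.1 + p.2))))
      momentPolytope volume ∧
    (∫ p in momentPolytope, p.2 * Real.exp (-(t * (2 * p.1 + p.2)))) = 0 := by
  set f : ℝ × ℝ → ℝ := fun p => p.2 * Real.exp (-(t * (2 * p.1 + p.2))) with hf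
  have hint : IntegrableOn f momentPolytope volume := by
    -- dominate by `e^t * e^{-2t x₁}` on `Ici (-1) ×ˢ Icc (-1) 1`
    have hg1 : IntegrableOn (fun x : ℝ => Real.exp t * Real.exp (-(2 * t) * x))
        (Set.Ici (-1 : ℝ)) volume := by
      have := (exp_neg_integrableOn_Ioi (-1 : ℝ) (b := 2 * t) (by linarith)).const_mul
        (Real.exp t)
      exact IntegrableOn.congr_set_ae this (MeasureTheory.Ioi_ae_eq_Ici (a := (-1:ℝ))).symm
    have hg2 : IntegrableOn (fun _ : ℝ => (1 : ℝ)) (Set.Icc (-1 : ℝ) 1) volume := by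
      exact integrableOn_const (by simp) (by simp)
    have hgprod : IntegrableOn
        (fun p : ℝ × ℝ => (Real.exp t * Real.exp (-(2 * t) * p.1)) * (1 : ℝ))
        (Set.Ici (-1 : ℝ) ×ˢ Set.Icc (-1 : ℝ) 1) volume := by
      have := Integrable.mul_prod hg1 hg2
      rw [Measure.prod_restrict] at this
      rw [IntegrableOn, MeasureTheory.Measure.volume_eq_prod]
      exact this
    have hsub : momentPolytope ⊆ Set.Ici (-1 : ℝ) ×ˢ Set.Icc (-1 : ℝ) 1 := by
      rintro ⟨x, y⟩ ⟨h1, h2, h3, h4⟩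
      exact ⟨h1, h2, h3⟩
    have hgP := hgprod.mono_set hsub
    refine Integrable.mono hgP (Continuous.aestronglyMeasurable (by fun_prop)).restrict ?_
    refine (ae_restrict_mem momentPolytope_measurable).mono ?_
    rintro ⟨x, y⟩ ⟨h1, h2, h3, h4⟩
    have hy : |y| ≤ 1 := abs_le.2 ⟨h2, h3⟩
    have he : Real.exp (-(t * (2 * x + y))) ≤ Real.exp t * Real.exp (-(2 * t) * x) := by
      rw [← Real.exp_add]
      apply Real.exp_le_exp.2
      nlinarith
    have hepos : 0 < Real.exp (-(t * (2 * x + y))) := Real.exp_pos _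
    calc ‖y * Real.exp (-(t * (2 * x + y)))‖
        = |y| * Real.exp (-(t * (2 * x + y))) := by
          rw [Real.norm_eq_abs, abs_mul, abs_of_pos hepos]
      _ ≤ 1 * (Real.exp t * Real.exp (-(2 * t) * x)) := by
          apply mul_le_mul hy he (le_of_lt hepos) zero_le_one
      _ = ‖(Real.exp t * Real.exp (-(2 * t) * x)) * 1‖ := by
          rw [one_mul, mul_one, Real.norm_eq_abs, abs_of_pos (by positivity)]
  refine ⟨hint, ?_⟩
  have hemb : MeasurableEmbedding (fun p : ℝ × ℝ => (p.1 + p.2, -p.2)) :=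
    sigmaEquiv.measurableEmbedding
  have key := sigma_measurePreserving.setIntegral_preimage_emb hemb f momentPolytope
  rw [sigma_preimage] at key
  have hcomp : ∀ p : ℝ × ℝ, f (p.1 + p.2, -p.2) = -f p := by
    intro p
    simp only [hf]
    ring_nf
  have : (∫ p in momentPolytope, -f p) = ∫ p in momentPolytope, f p := by
    rw [← key]
    exact integral_congr_ae (Filter.Eventually.of_forall fun p => (hcomp p).symm)
  rw [integral_neg] at this
  linarith
end

section
/- Let ν₁,…,ν_r ∈ ℝⁿ and c₁,…,c_r ∈ ℝ, let P = ⋂_{i=1}^{r} {x ∈ ℝⁿ : ⟨νᵢ, x⟩ ≥ cᵢ} and C = ⋂_{i=1}^{r} {x ∈ ℝⁿ : ⟨νᵢ, x⟩ ≥ 0}, and let v lie in the topological interior of the dual cone C^∨ = {y ∈ ℝⁿ : ⟨y, x⟩ ≥ 0 for all x ∈ C}. Then the set Q = {x ∈ P : ⟨v, x⟩ ≤ 0} is compact. -/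
open scoped RealInnerProductSpace

/-- Let `P = ⋂ᵢ {x : ⟪νᵢ,x⟫ ≥ cᵢ}` be a polyhedron in `ℝⁿ` with asymptotic cone
`C = ⋂ᵢ {x : ⟪νᵢ,x⟫ ≥ 0}`, and let `v` lie in the interior of the dual cone
`C^∨ = {y : ⟪y,x⟫ ≥ 0 for all x ∈ C}`. Then `Q = {x ∈ P : ⟪v,x⟫ ≤ 0}` is compact. -/
theorem stmt_11 (n r : ℕ) (ν : Fin r → EuclideanSpace ℝ (Fin n)) (c : Fin r → ℝ)
    (P C : Set (EuclideanSpace ℝ (Fin n)))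
    (hP : P = ⋂ i, {x : EuclideanSpace ℝ (Fin n) | c i ≤ ⟪ν i, x⟫})
    (hC : C = ⋂ i, {x : EuclideanSpace ℝ (Fin n) | 0 ≤ ⟪ν i, x⟫})
    (v : EuclideanSpace ℝ (Fin n))
    (hv : v ∈ interior {y : EuclideanSpace ℝ (Fin n) | ∀ x ∈ C, 0 ≤ ⟪y, x⟫}) :
    IsCompact {x ∈ P | ⟪v, x⟫ ≤ 0} := by
  haveI : Fact (True) := ⟨trivial⟩
  let E := EuclideanSpace ℝ (Fin n)
  -- the set is closed
  have hclosed : IsClosed {x ∈ P | ⟪v, x⟫ ≤ 0} := by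
    have : {x ∈ P | ⟪v, x⟫ ≤ 0} = P ∩ {x : E | ⟪v, x⟫ ≤ 0} := rfl
    rw [this, hP]
    exact (isClosed_iInter fun i =>
        isClosed_le continuous_const (continuous_const.inner continuous_id)).inter
      (isClosed_le (continuous_const.inner continuous_id) continuous_const)
  -- quantitative interior condition
  obtain ⟨ε, hε, hball⟩ := Metric.mem_nhds_iff.mp (mem_interior_iff_mem_nhds.mp hv)
  have key : ∀ u ∈ C, ε / 2 * ‖u‖ ≤ ⟪v, u⟫ := by
    intro u hu
    rcases eq_or_ne u 0 with h | h
    · simp [h]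
    · have hun : (0:ℝ) < ‖u‖ := norm_pos_iff.mpr h
      have hw : v - ((ε / 2) * ‖u‖⁻¹) • u ∈ Metric.ball v ε := by
        rw [Metric.mem_ball, dist_eq_norm]
        have : v - ((ε / 2) * ‖u‖⁻¹) • u - v = -(((ε / 2) * ‖u‖⁻¹) • u) := by abel
        rw [this, norm_neg, norm_smul]
        have : ‖(ε / 2) * ‖u‖⁻¹‖ = (ε / 2) * ‖u‖⁻¹ := by
          rw [Real.norm_eq_abs, abs_of_nonneg]
          positivity
        rw [this]
        have : ε / 2 * ‖u‖⁻¹ * ‖u‖ = ε / 2 := by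
          rw [mul_assoc, inv_mul_cancel₀ hun.ne', mul_one]
        rw [this]; linarith
      have h0 := hball hw u hu
      rw [inner_sub_left, real_inner_smul_left, real_inner_self_eq_norm_mul_norm] at h0
      have hinv : ‖u‖⁻¹ * (‖u‖ * ‖u‖) = ‖u‖ := by field_simp
      nlinarith [h0]
  -- trivial case: unit sphere empty (the space is a point)
  by_cases hS : (Metric.sphere (0:E) 1).Nonempty
  swap
  · have hsub : {x ∈ P | ⟪v, x⟫ ≤ 0} ⊆ {(0:E)} := by
      intro x _
      by_contra hx0
      have hx0' : x ≠ 0 := by simpa using hx0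
      exact hS ⟨‖x‖⁻¹ • x, by
        rw [mem_sphere_zero_iff_norm]
        exact norm_smul_inv_norm (𝕜 := ℝ) hx0'⟩
    exact isCompact_singleton.of_isClosed_subset hclosed hsub
  -- main case
  have hne : (Finset.univ : Finset (Fin (r + 1))).Nonempty := Finset.univ_nonempty
  set G : Fin (r + 1) → E → ℝ :=
    fun j u => Fin.cases ⟪v, u⟫ (fun i => -⟪ν i, u⟫) j with hG
  set F : E → ℝ := fun u => Finset.univ.sup' hne (fun j => G j u) with hF
  have hGcont : ∀ j, Continuous (G j) := by
    intro j
    induction j using Fin.cases with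
    | zero => simpa [hG] using (continuous_const.inner continuous_id : Continuous fun u : E => ⟪v, u⟫)
    | succ i => simp only [hG, Fin.cases_succ]; exact
        ((continuous_const.inner continuous_id : Continuous fun u : E => ⟪ν i, u⟫)).neg
  have hFcont : Continuous F := by
    apply Continuous.finset_sup'_apply hne
    intro j _
    exact hGcont j
  obtain ⟨u₀, hu₀S, hmin'⟩ := (isCompact_sphere (0:E) 1).exists_isMinOn hS hFcont.continuousOn
  have hmin : ∀ u ∈ Metric.sphere (0:E) 1, F u₀ ≤ F u := fun u hu => hmin' hu
  set δ := F u₀ with hδdef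
  have hu₀n : ‖u₀‖ = 1 := mem_sphere_zero_iff_norm.mp hu₀S
  have hδ : 0 < δ := by
    by_contra hδ0
    push_neg at hδ0
    have hall : ∀ j, G j u₀ ≤ 0 := by
      intro j
      have := Finset.le_sup' (fun j => G j u₀) (Finset.mem_univ j)
      linarith [this]
    have hu₀C : u₀ ∈ C := by
      rw [hC, Set.mem_iInter]
      intro i
      have h4 := hall i.succ
      simp only [hG, Fin.cases_succ] at h4
      show (0:ℝ) ≤ ⟪ν i, u₀⟫
      linarith
    have h1 := key u₀ hu₀C
    have h2 := hall 0
    simp only [hG, Fin.cases_zero] at h2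
    rw [hu₀n] at h1
    linarith
  set M : ℝ := Finset.univ.sup' hne
    (fun j : Fin (r + 1) => Fin.cases (motive := fun _ => ℝ) (0:ℝ) (fun i => -c i / δ) j) with hM
  have hM0 : (0:ℝ) ≤ M := by
    have := Finset.le_sup' (fun j : Fin (r + 1) => Fin.cases (motive := fun _ => ℝ) (0:ℝ) (fun i => -c i / δ) j)
      (Finset.mem_univ (0 : Fin (r + 1)))
    simp only [Fin.cases_zero] at this
    exact this
  have hbound : ∀ x ∈ {x ∈ P | ⟪v, x⟫ ≤ 0}, ‖x‖ ≤ M := by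
    rintro x ⟨hxP, hxv⟩
    rcases eq_or_ne x 0 with h | h
    · simp [h, hM0]
    · have hxn : (0:ℝ) < ‖x‖ := norm_pos_iff.mpr h
      set u : E := ‖x‖⁻¹ • x with hu
      have huS : u ∈ Metric.sphere (0:E) 1 := by
        rw [mem_sphere_zero_iff_norm]
        exact norm_smul_inv_norm (𝕜 := ℝ) h
      have hFu : δ ≤ F u := hmin u huS
      obtain ⟨j, _, hjeq⟩ := Finset.exists_mem_eq_sup' hne (fun j => G j u)
      have hFu2 : δ ≤ G j u := by rw [← hjeq]; exact hFu
      clear hFu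
      rename' hFu2 => hFu
      induction j using Fin.cases with
      | zero =>
        simp only [hG, Fin.cases_zero, hu, real_inner_smul_right] at hFu
        have : ‖x‖⁻¹ * ⟪v, x⟫ ≤ 0 :=
          mul_nonpos_of_nonneg_of_nonpos (by positivity) hxv
        linarith
      | succ i =>
        simp only [hG, Fin.cases_succ, hu, real_inner_smul_right] at hFu
        have hci : c i ≤ ⟪ν i, x⟫ := by
          rw [hP, Set.mem_iInter] at hxP
          exact hxP i
        have hinv : ‖x‖⁻¹ * ‖x‖ = 1 := inv_mul_cancel₀ hxn.ne'
        have hle : ‖x‖ ≤ -c i / δ := by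
          rw [le_div_iff₀ hδ]
          have h5 : δ * ‖x‖ ≤ -(‖x‖⁻¹ * ⟪ν i, x⟫) * ‖x‖ :=
            mul_le_mul_of_nonneg_right hFu hxn.le
          have h6 : -(‖x‖⁻¹ * ⟪ν i, x⟫) * ‖x‖ = -⟪ν i, x⟫ := by
            rw [neg_mul, mul_comm ‖x‖⁻¹, mul_assoc, hinv, mul_one]
          linarith
        refine hle.trans ?_
        have := Finset.le_sup' (fun j : Fin (r + 1) => Fin.cases (motive := fun _ => ℝ) (0:ℝ) (fun i => -c i / δ) j)
          (Finset.mem_univ (i.succ : Fin (r + 1)))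
        simp only [Fin.cases_succ] at this
        exact this
  exact Metric.isCompact_of_isClosed_isBounded hclosed
    (isBounded_iff_forall_norm_le.mpr ⟨M, hbound⟩)
end

section
/- Let ν₁,…,ν_r ∈ ℝⁿ and c₁,…,c_r ∈ ℝ, let P = ⋂_{i=1}^{r} {x ∈ ℝⁿ : ⟨νᵢ, x⟩ ≥ cᵢ} and C = ⋂_{i=1}^{r} {x ∈ ℝⁿ : ⟨νᵢ, x⟩ ≥ 0}, and let v lie in the topological interior of the dual cone C^∨ = {y ∈ ℝⁿ : ⟨y, x⟩ ≥ 0 for all x ∈ C}. Then the function x ↦ e^{−⟨v, x⟩} is integrable on P with respect to Lebesgue measure on ℝⁿ. -/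
open MeasureTheory
open scoped RealInnerProductSpace

/-- Let `P = ⋂ᵢ {x : ⟪νᵢ,x⟫ ≥ cᵢ}` be a polyhedron in `ℝⁿ` with asymptotic cone
`C = ⋂ᵢ {x : ⟪νᵢ,x⟫ ≥ 0}`, and let `v` lie in the interior of the dual cone
`C^∨`. Then `x ↦ e^{−⟪v,x⟫}` is integrable on `P` with respect to Lebesgue measure. -/
theorem stmt_12 (n r : ℕ) (ν : Fin r → EuclideanSpace ℝ (Fin n)) (c : Fin r → ℝ)
    (P C : Set (EuclideanSpace ℝ (Fin n)))
    (hP : P = ⋂ i, {x : EuclideanSpace ℝ (Fin n) | c i ≤ ⟪ν i, x⟫})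
    (hC : C = ⋂ i, {x : EuclideanSpace ℝ (Fin n) | 0 ≤ ⟪ν i, x⟫})
    (v : EuclideanSpace ℝ (Fin n))
    (hv : v ∈ interior {y : EuclideanSpace ℝ (Fin n) | ∀ x ∈ C, 0 ≤ ⟪y, x⟫}) :
    IntegrableOn (fun x : EuclideanSpace ℝ (Fin n) => Real.exp (-⟪v, x⟫)) P volume := by
  rw [mem_interior_iff_mem_nhds, Metric.mem_nhds_iff] at hv
  obtain ⟨ε, hε, hball⟩ := hv
  set δ : ℝ := ε / 2 with hδdef
  have hδ : 0 < δ := by positivity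
  -- Step 1: on the cone, ⟪v, x⟫ ≥ δ ‖x‖
  have key1 : ∀ x ∈ C, δ * ‖x‖ ≤ ⟪v, x⟫ := by
    intro x hx
    rcases eq_or_ne x 0 with h0 | h0
    · simp [h0]
    · have hxn : 0 < ‖x‖ := norm_pos_iff.mpr h0
      have hu : v - (δ / ‖x‖) • x ∈ Metric.ball v ε := by
        rw [Metric.mem_ball, dist_eq_norm]
        have heq : v - (δ / ‖x‖) • x - v = -((δ / ‖x‖) • x) := by abel
        rw [heq, norm_neg, norm_smul, Real.norm_eq_abs, abs_of_pos (by positivity)]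
        rw [div_mul_cancel₀ _ (ne_of_gt hxn)]
        linarith
      have h2 : 0 ≤ ⟪v - (δ / ‖x‖) • x, x⟫ := hball hu x hx
      rw [inner_sub_left, real_inner_smul_left, real_inner_self_eq_norm_sq] at h2
      have : (δ / ‖x‖) * ‖x‖ ^ 2 = δ * ‖x‖ := by field_simp
      nlinarith
  -- Step 2: on P, ⟪v, x⟫ ≥ (δ/2) ‖x‖ - M for some M
  have key2 : ∃ M : ℝ, ∀ x ∈ P, δ / 2 * ‖x‖ - M ≤ ⟪v, x⟫ := by
    by_contra h
    push_neg at h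
    choose x hxP hxlt using fun k : ℕ => h k
    have hA : 0 < ‖v‖ + δ / 2 := by positivity
    have hnorm : ∀ k : ℕ, (k : ℝ) < (‖v‖ + δ / 2) * ‖x k‖ := by
      intro k
      have h1 := hxlt k
      have h2 : |⟪v, x k⟫| ≤ ‖v‖ * ‖x k‖ := abs_real_inner_le_norm v (x k)
      have h3 : -(‖v‖ * ‖x k‖) ≤ ⟪v, x k⟫ := neg_le_of_abs_le h2
      linarith
    have hx0 : ∀ k : ℕ, 0 < ‖x k‖ := by
      intro k
      by_contra hcon
      push_neg at hcon
      have := hnorm k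
      have h4 : (‖v‖ + δ / 2) * ‖x k‖ ≤ 0 := mul_nonpos_of_nonneg_of_nonpos hA.le hcon
      have h5 : (0 : ℝ) ≤ (k : ℝ) := Nat.cast_nonneg k
      linarith
    set y : ℕ → EuclideanSpace ℝ (Fin n) := fun k => ‖x k‖⁻¹ • x k with hy
    have hys : ∀ k, y k ∈ Metric.sphere (0 : EuclideanSpace ℝ (Fin n)) 1 := by
      intro k
      simp only [Metric.mem_sphere, dist_zero_right, hy]
      exact norm_smul_inv_norm (norm_pos_iff.mp (hx0 k))
    obtain ⟨y0, hy0s, φ, hφ, hty⟩ := (isCompact_sphere (0 : EuclideanSpace ℝ (Fin n)) 1).tendsto_subseq hys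
    -- norms go to infinity along the subsequence
    have hxk : Filter.Tendsto (fun k => ‖x (φ k)‖) Filter.atTop Filter.atTop := by
      apply Filter.tendsto_atTop_mono (f := fun k : ℕ => (k : ℝ) / (‖v‖ + δ / 2))
      · intro k
        rw [div_le_iff₀ hA]
        calc (k : ℝ) ≤ (φ k : ℝ) := by exact_mod_cast (hφ.le_apply)
          _ ≤ (‖v‖ + δ / 2) * ‖x (φ k)‖ := (hnorm (φ k)).le
          _ = ‖x (φ k)‖ * (‖v‖ + δ / 2) := by ring
      · exact (tendsto_natCast_atTop_atTop (R := ℝ)).atTop_div_const hA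
    have hinv0 : Filter.Tendsto (fun k => ‖x (φ k)‖⁻¹) Filter.atTop (nhds 0) :=
      hxk.inv_tendsto_atTop
    -- y0 belongs to the cone C
    have hy0C : y0 ∈ C := by
      rw [hC, Set.mem_iInter]
      intro i
      have htinner : Filter.Tendsto (fun k => ⟪ν i, y (φ k)⟫) Filter.atTop (nhds ⟪ν i, y0⟫) :=
        Filter.Tendsto.inner tendsto_const_nhds hty
      have htlow : Filter.Tendsto (fun k => ‖x (φ k)‖⁻¹ * c i) Filter.atTop (nhds 0) := by
        simpa using hinv0.mul_const (c i)
      have hb : ∀ k, ‖x (φ k)‖⁻¹ * c i ≤ ⟪ν i, y (φ k)⟫ := by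
        intro k
        have hxPk := hxP (φ k)
        rw [hP, Set.mem_iInter] at hxPk
        have hci : c i ≤ ⟪ν i, x (φ k)⟫ := hxPk i
        rw [hy]
        simp only [real_inner_smul_right]
        exact mul_le_mul_of_nonneg_left hci (by positivity)
      exact le_of_tendsto_of_tendsto' htlow htinner hb
    -- but ⟪v, y0⟫ ≤ δ/2
    have hup : ⟪v, y0⟫ ≤ δ / 2 := by
      have htinner : Filter.Tendsto (fun k => ⟪v, y (φ k)⟫) Filter.atTop (nhds ⟪v, y0⟫) :=
        Filter.Tendsto.inner tendsto_const_nhds hty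
      apply le_of_tendsto' htinner
      intro k
      have h1 := hxlt (φ k)
      have h2 : (0 : ℝ) ≤ (φ k : ℝ) := Nat.cast_nonneg _
      have h3 : ⟪v, x (φ k)⟫ ≤ δ / 2 * ‖x (φ k)‖ := by linarith
      rw [hy]
      simp only [real_inner_smul_right]
      have h4 := hx0 (φ k)
      calc ‖x (φ k)‖⁻¹ * ⟪v, x (φ k)⟫ ≤ ‖x (φ k)‖⁻¹ * (δ / 2 * ‖x (φ k)‖) :=
            mul_le_mul_of_nonneg_left h3 (by positivity)
        _ = δ / 2 := by field_simp
    have hlow := key1 y0 hy0C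
    have : ‖y0‖ = 1 := by simpa using hy0s
    rw [this, mul_one] at hlow
    linarith
  obtain ⟨M, hM⟩ := key2
  -- Step 3: exp(-(δ/2) t) ≤ K (1+t)^(-(n+1)) for t ≥ 0
  set a : ℝ := δ / 2 with ha
  have haa : 0 < a := by positivity
  set b : ℝ := a / (n + 1) with hb
  have hbb : 0 < b := by positivity
  set K : ℝ := (1 + 1 / b) ^ (n + 1) with hK
  have hK0 : 0 < K := by positivity
  have key3 : ∀ t : ℝ, 0 ≤ t → Real.exp (-(a * t)) ≤ K * (1 + t) ^ (-(n + 1) : ℝ) := by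
    intro t ht
    have h1t : (0 : ℝ) < 1 + t := by linarith
    have hlin : 1 + t ≤ (1 + 1 / b) * Real.exp (b * t) := by
      have he : b * t + 1 ≤ Real.exp (b * t) := Real.add_one_le_exp (b * t)
      have he1 : (1 : ℝ) ≤ Real.exp (b * t) := by
        nlinarith [Real.exp_pos (b * t)]
      have hinvb : 0 < 1 / b := by positivity
      have h5 : t + 1 / b ≤ (1 / b) * Real.exp (b * t) := by
        calc t + 1 / b = (1 / b) * (b * t + 1) := by field_simp
          _ ≤ (1 / b) * Real.exp (b * t) := mul_le_mul_of_nonneg_left he hinvb.le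
      have h6 : (1 + 1 / b) * Real.exp (b * t) = Real.exp (b * t) + (1 / b) * Real.exp (b * t) := by
        ring
      linarith
    have hpow : (1 + t) ^ (n + 1) ≤ K * Real.exp (a * t) := by
      calc (1 + t) ^ (n + 1) ≤ ((1 + 1 / b) * Real.exp (b * t)) ^ (n + 1) :=
            pow_le_pow_left₀ h1t.le hlin _
        _ = K * (Real.exp (b * t)) ^ (n + 1) := by rw [mul_pow, hK]
        _ = K * Real.exp (a * t) := by
            rw [← Real.exp_nat_mul]
            congr 1
            rw [hb]
            field_simp
            push_cast
            congr 1
            have hn1 : (n:ℝ) + 1 ≠ 0 := by positivity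
            field_simp
    have hrw : (1 + t) ^ (-(n + 1) : ℝ) = ((1 + t) ^ (n + 1))⁻¹ := by
      rw [← Real.rpow_natCast (1 + t) (n + 1), ← Real.rpow_neg h1t.le]
      push_cast
      ring_nf
    have hp1 : (0 : ℝ) < (1 + t) ^ (n + 1) := by positivity
    rw [hrw, ← div_eq_mul_inv, le_div_iff₀ hp1]
    calc Real.exp (-(a * t)) * (1 + t) ^ (n + 1)
        ≤ Real.exp (-(a * t)) * (K * Real.exp (a * t)) :=
          mul_le_mul_of_nonneg_left hpow (Real.exp_pos _).le
      _ = K := by rw [Real.exp_neg]; field_simp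
  -- P is measurable (it is closed)
  have hPmeas : MeasurableSet P := by
    rw [hP]
    apply MeasurableSet.iInter
    intro i
    exact measurableSet_le measurable_const
      (Continuous.measurable (continuous_const.inner continuous_id : Continuous fun x : EuclideanSpace ℝ (Fin n) => ⟪ν i, x⟫))
  -- dominating function
  have hdom : Integrable (fun x : EuclideanSpace ℝ (Fin n) => Real.exp M * K * (1 + ‖x‖) ^ (-(n + 1) : ℝ))
      (volume : Measure (EuclideanSpace ℝ (Fin n))) := by
    have hnr : (Module.finrank ℝ (EuclideanSpace ℝ (Fin n)) : ℝ) < (n + 1 : ℝ) := by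
      rw [finrank_euclideanSpace_fin]
      linarith
    have := integrable_one_add_norm (E := EuclideanSpace ℝ (Fin n)) (μ := volume) hnr
    simpa using this.const_mul (Real.exp M * K)
  apply Integrable.mono' hdom.integrableOn
  · exact Continuous.aestronglyMeasurable
      (Real.continuous_exp.comp (continuous_const.inner continuous_id).neg) |>.restrict
  · rw [ae_restrict_iff' hPmeas]
    filter_upwards with x hx
    have h1 := hM x hx
    have h2 : Real.exp (-⟪v, x⟫) ≤ Real.exp M * Real.exp (-(a * ‖x‖)) := by
      rw [← Real.exp_add]
      apply Real.exp_le_exp.mpr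
      rw [ha] at h1 ⊢
      linarith
    have h3 := key3 ‖x‖ (norm_nonneg x)
    rw [Real.norm_eq_abs, abs_of_pos (Real.exp_pos _)]
    calc Real.exp (-⟪v, x⟫) ≤ Real.exp M * Real.exp (-(a * ‖x‖)) := h2
      _ ≤ Real.exp M * (K * (1 + ‖x‖) ^ (-(n + 1) : ℝ)) :=
          mul_le_mul_of_nonneg_left h3 (Real.exp_pos M).le
      _ = Real.exp M * K * (1 + ‖x‖) ^ (-(n + 1) : ℝ) := by ring
end

section
/- Let ν₁,…,ν_r ∈ ℝⁿ and c₁,…,c_r ∈ ℝ, let P = ⋂_{i=1}^{r} {x ∈ ℝⁿ : ⟨νᵢ, x⟩ ≥ cᵢ} and C = ⋂_{i=1}^{r} {x ∈ ℝⁿ : ⟨νᵢ, x⟩ ≥ 0}, assume 0 lies in the topological interior of P, and let Λ denote the topological interior of the dual cone C^∨ = {y ∈ ℝⁿ : ⟨y, x⟩ ≥ 0 for all x ∈ C}. Then the function F : Λ → ℝ defined by F(v) = ∫_P e^{−⟨v,x⟩} dx (Lebesgue measure on ℝⁿ) is a proper map: it is continuous and the preimage under F of every compact subset of ℝ is compact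 in Λ. -/
open MeasureTheory Metric Filter Topology
open scoped RealInnerProductSpace

lemma aux_integrable_exp_neg_norm (n : ℕ) {a : ℝ} (ha : 0 < a) :
    Integrable (fun x : EuclideanSpace ℝ (Fin n) => Real.exp (-(a * ‖x‖))) := by
  set m : ℕ := n + 1 with hm
  set K : ℝ := max 1 ((m : ℝ) / a) with hK
  have hK1 : (1:ℝ) ≤ K := le_max_left _ _
  have hKm : (m:ℝ)/a ≤ K := le_max_right _ _
  have hm0 : (0:ℝ) < m := by positivity
  -- key pointwise bound : (1+t)^m ≤ K^m * exp (a*t) for t ≥ 0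
  have key : ∀ t : ℝ, 0 ≤ t → (1 + t) ^ m ≤ K ^ m * Real.exp (a * t) := by
    intro t ht
    have h1 : 1 + t ≤ K * (1 + (a / m) * t) := by
      have h2 : 1 ≤ K * (a / m) := by
        have : (m:ℝ)/a * (a/m) = 1 := by field_simp
        calc (1:ℝ) = (m:ℝ)/a * (a/m) := this.symm
          _ ≤ K * (a/m) := by
              apply mul_le_mul_of_nonneg_right hKm
              positivity
      nlinarith
    have h3 : K * (1 + (a / m) * t) ≤ K * Real.exp (a / m * t) := by
      apply mul_le_mul_of_nonneg_left _ (by linarith)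
      have := Real.add_one_le_exp (a / m * t)
      linarith
    calc (1 + t) ^ m ≤ (K * Real.exp (a / m * t)) ^ m := by
          apply pow_le_pow_left₀ (by linarith) (h1.trans h3)
      _ = K ^ m * (Real.exp (a / m * t)) ^ m := mul_pow _ _ _
      _ = K ^ m * Real.exp (a * t) := by
          rw [← Real.exp_nat_mul, show (m:ℝ) * (a / m * t) = a * t by field_simp]
  have hmeas : AEStronglyMeasurable
      (fun x : EuclideanSpace ℝ (Fin n) => Real.exp (-(a * ‖x‖))) volume :=
    (Real.continuous_exp.comp ((continuous_const.mul continuous_norm).neg)).aestronglyMeasurable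
  have hint : Integrable (fun x : EuclideanSpace ℝ (Fin n) => K ^ m * (1 + ‖x‖) ^ (-(m:ℝ))) := by
    refine (integrable_one_add_norm ?_).const_mul _
    rw [finrank_euclideanSpace_fin, hm]
    push_cast; linarith
  refine hint.mono' hmeas ?_
  filter_upwards with x
  rw [Real.norm_eq_abs, abs_of_pos (Real.exp_pos _)]
  have h1 : (0:ℝ) < 1 + ‖x‖ := by positivity
  have h2 : (1 + ‖x‖) ^ (-(m:ℝ)) = ((1 + ‖x‖) ^ m)⁻¹ := by
    rw [Real.rpow_neg h1.le, Real.rpow_natCast]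
  have hp : (0:ℝ) < (1+‖x‖)^m := pow_pos h1 m
  rw [h2, ← div_eq_mul_inv, le_div_iff₀ hp, Real.exp_neg, inv_mul_le_iff₀ (Real.exp_pos _)]
  calc (1 + ‖x‖) ^ m ≤ K ^ m * Real.exp (a * ‖x‖) := key ‖x‖ (norm_nonneg x)
    _ = Real.exp (a * ‖x‖) * K ^ m := mul_comm _ _

lemma aux_coercive {n r : ℕ} (ν : Fin r → EuclideanSpace ℝ (Fin n)) (c : Fin r → ℝ)
    {v : EuclideanSpace ℝ (Fin n)}
    (hv : v ∈ interior {y : EuclideanSpace ℝ (Fin n) |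
      ∀ x ∈ ⋂ i, {x : EuclideanSpace ℝ (Fin n) | 0 ≤ ⟪ν i, x⟫}, 0 ≤ ⟪y, x⟫}) :
    ∃ δ : ℝ, 0 < δ ∧ ∃ M : ℝ, ∀ x ∈ ⋂ i, {x : EuclideanSpace ℝ (Fin n) | c i ≤ ⟪ν i, x⟫},
      δ * ‖x‖ - M ≤ ⟪v, x⟫ := by
  by_contra hcon
  push_neg at hcon
  have h' : ∀ k : ℕ, ∃ y, (y ∈ ⋂ i, {x : EuclideanSpace ℝ (Fin n) | c i ≤ ⟪ν i, x⟫}) ∧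
      ⟪v, y⟫ < (1/((k:ℝ)+1)) * ‖y‖ - ((k:ℝ)+1) := by
    intro k
    obtain ⟨y, hyP, hy⟩ := hcon (1/((k:ℝ)+1)) (by positivity) ((k:ℝ)+1)
    exact ⟨y, hyP, by linarith⟩
  choose x hxP hxlt using h'
  have h1v : (0:ℝ) < 1 + ‖v‖ := by positivity
  have hnorm : ∀ k : ℕ, ((k:ℝ)+1) < (1 + ‖v‖) * ‖x k‖ := by
    intro k
    have h1 : |⟪v, x k⟫| ≤ ‖v‖ * ‖x k‖ := abs_real_inner_le_norm v (x k)
    have h2 : (1/((k:ℝ)+1)) * ‖x k‖ ≤ 1 * ‖x k‖ := by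
      apply mul_le_mul_of_nonneg_right _ (norm_nonneg _)
      rw [div_le_one (by positivity)]; linarith
    have h3 := hxlt k
    have h4 := abs_le.mp h1
    nlinarith [norm_nonneg (x k)]
  have hxpos : ∀ k, 0 < ‖x k‖ := by
    intro k
    nlinarith [hnorm k, norm_nonneg (x k), norm_nonneg v]
  set u : ℕ → EuclideanSpace ℝ (Fin n) := fun k => ‖x k‖⁻¹ • x k with hu_def
  have hu : ∀ k, u k ∈ sphere (0 : EuclideanSpace ℝ (Fin n)) 1 := by
    intro k
    rw [mem_sphere_zero_iff_norm, hu_def, norm_smul, norm_inv, norm_norm,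
      inv_mul_cancel₀ (hxpos k).ne']
  obtain ⟨w, hws, φ, hφ, hconv⟩ :=
    (isCompact_sphere (0 : EuclideanSpace ℝ (Fin n)) 1).tendsto_subseq hu
  have hwnorm : ‖w‖ = 1 := mem_sphere_zero_iff_norm.mp hws
  -- ‖x (φ k)‖ → ∞
  have hxtop : Tendsto (fun k : ℕ => ‖x (φ k)‖) atTop atTop := by
    apply tendsto_atTop_mono (f := fun k : ℕ => ((k:ℝ)+1) / (1 + ‖v‖))
    · intro k
      rw [div_le_iff₀ h1v, mul_comm]
      have := hnorm (φ k)
      have hk : ((k:ℝ)+1) ≤ ((φ k : ℝ)+1) := by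
        have h5 : (k:ℝ) ≤ (φ k : ℝ) := Nat.cast_le.mpr hφ.le_apply
        linarith
      linarith
    · apply Tendsto.atTop_div_const h1v
      apply tendsto_atTop_add_const_right
      exact tendsto_natCast_atTop_atTop
  -- w ∈ C
  have hwC : w ∈ ⋂ i, {x : EuclideanSpace ℝ (Fin n) | 0 ≤ ⟪ν i, x⟫} := by
    rw [Set.mem_iInter]
    intro i
    have hlim : Tendsto (fun k => ⟪ν i, u (φ k)⟫) atTop (𝓝 ⟪ν i, w⟫) :=
      Tendsto.inner tendsto_const_nhds hconv
    have hlow : Tendsto (fun k => c i / ‖x (φ k)‖) atTop (𝓝 0) :=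
      Tendsto.const_div_atTop hxtop (c i)
    refine le_of_tendsto_of_tendsto hlow hlim ?_
    filter_upwards with k
    rw [hu_def, real_inner_smul_right]
    rw [div_eq_inv_mul]
    apply mul_le_mul_of_nonneg_left _ (inv_nonneg.mpr (hxpos _).le)
    exact Set.mem_iInter.mp (hxP (φ k)) i
  -- ⟪v, w⟫ ≤ 0
  have hvw : ⟪v, w⟫ ≤ 0 := by
    have hlim : Tendsto (fun k => ⟪v, u (φ k)⟫) atTop (𝓝 ⟪v, w⟫) :=
      Tendsto.inner tendsto_const_nhds hconv
    have hup : Tendsto (fun k : ℕ => 1/((k:ℝ)+1)) atTop (𝓝 0) :=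
      tendsto_one_div_add_atTop_nhds_zero_nat
    refine le_of_tendsto_of_tendsto hlim hup ?_
    filter_upwards with k
    have h3 := hxlt (φ k)
    have hp := hxpos (φ k)
    have key : ⟪v, u (φ k)⟫ ≤ 1/((φ k : ℝ)+1) := by
      rw [hu_def, real_inner_smul_right]
      have : ⟪v, x (φ k)⟫ < (1/((φ k:ℝ)+1)) * ‖x (φ k)‖ := by
        have : (0:ℝ) < (φ k : ℝ) + 1 := by positivity
        nlinarith
      calc ‖x (φ k)‖⁻¹ * ⟪v, x (φ k)⟫ ≤ ‖x (φ k)‖⁻¹ * ((1/((φ k:ℝ)+1)) * ‖x (φ k)‖) := by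
            apply mul_le_mul_of_nonneg_left this.le (inv_nonneg.mpr hp.le)
        _ = 1/((φ k : ℝ)+1) := by field_simp
    refine key.trans ?_
    apply div_le_div_of_nonneg_left (by norm_num) (by positivity)
    have h5 : (k:ℝ) ≤ (φ k : ℝ) := Nat.cast_le.mpr hφ.le_apply
    linarith
  -- contradiction
  rw [mem_interior_iff_mem_nhds, Metric.mem_nhds_iff] at hv
  obtain ⟨δ₀, hδ₀, hball⟩ := hv
  have hwb : v - (δ₀/2) • w ∈ ball v δ₀ := by
    rw [mem_ball_iff_norm, sub_sub_cancel_left, norm_neg, norm_smul, hwnorm,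
      Real.norm_eq_abs, abs_of_pos (by linarith)]
    linarith
  have h0 := hball hwb w hwC
  rw [inner_sub_left, real_inner_smul_left, real_inner_self_eq_norm_mul_norm, hwnorm] at h0
  linarith

lemma aux_boundary {n r : ℕ} (ν : Fin r → EuclideanSpace ℝ (Fin n))
    {w : EuclideanSpace ℝ (Fin n)}
    (hw : w ∉ interior {y : EuclideanSpace ℝ (Fin n) |
      ∀ x ∈ ⋂ i, {x : EuclideanSpace ℝ (Fin n) | 0 ≤ ⟪ν i, x⟫}, 0 ≤ ⟪y, x⟫}) :
    ∃ u : EuclideanSpace ℝ (Fin n),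
      (u ∈ ⋂ i, {x : EuclideanSpace ℝ (Fin n) | 0 ≤ ⟪ν i, x⟫}) ∧ ‖u‖ = 1 ∧ ⟪w, u⟫ ≤ 0 := by
  rw [mem_interior_iff_mem_nhds] at hw
  have h' : ∀ k : ℕ, ∃ y : EuclideanSpace ℝ (Fin n), ∃ z : EuclideanSpace ℝ (Fin n),
      dist y w < 1/((k:ℝ)+1) ∧ (z ∈ ⋂ i, {x : EuclideanSpace ℝ (Fin n) | 0 ≤ ⟪ν i, x⟫}) ∧
      ⟪y, z⟫ < 0 := by
    intro k
    by_contra hk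
    push_neg at hk
    apply hw
    rw [Metric.mem_nhds_iff]
    refine ⟨1/((k:ℝ)+1), by positivity, ?_⟩
    intro y hy
    rw [Set.mem_setOf_eq]
    intro z hz
    rw [mem_ball] at hy
    exact hk y z hy hz
  choose y z hy hzC hyz using h'
  have hzne : ∀ k, 0 < ‖z k‖ := by
    intro k
    rw [norm_pos_iff]
    intro h0
    have h1 := hyz k
    rw [h0, inner_zero_right] at h1
    exact absurd h1 (lt_irrefl 0)
  set u : ℕ → EuclideanSpace ℝ (Fin n) := fun k => ‖z k‖⁻¹ • z k with hu_def
  have hus : ∀ k, u k ∈ sphere (0 : EuclideanSpace ℝ (Fin n)) 1 := by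
    intro k
    rw [mem_sphere_zero_iff_norm, hu_def, norm_smul, norm_inv, norm_norm,
      inv_mul_cancel₀ (hzne k).ne']
  obtain ⟨u9, hu9s, φ, hφ, hconv⟩ :=
    (isCompact_sphere (0 : EuclideanSpace ℝ (Fin n)) 1).tendsto_subseq hus
  have hu9norm : ‖u9‖ = 1 := mem_sphere_zero_iff_norm.mp hu9s
  have hyw : Tendsto (fun k => y (φ k)) atTop (𝓝 w) := by
    rw [tendsto_iff_dist_tendsto_zero]
    apply squeeze_zero (fun k => dist_nonneg) (g := fun k : ℕ => 1/((k:ℝ)+1))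
    · intro k
      refine (hy (φ k)).le.trans ?_
      apply div_le_div_of_nonneg_left (by norm_num) (by positivity)
      have h5 : (k:ℝ) ≤ (φ k : ℝ) := Nat.cast_le.mpr hφ.le_apply
      linarith
    · exact tendsto_one_div_add_atTop_nhds_zero_nat
  refine ⟨u9, ?_, hu9norm, ?_⟩
  · rw [Set.mem_iInter]
    intro i
    have hlim : Tendsto (fun k => ⟪ν i, u (φ k)⟫) atTop (𝓝 ⟪ν i, u9⟫) :=
      Tendsto.inner tendsto_const_nhds hconv
    refine le_of_tendsto_of_tendsto tendsto_const_nhds hlim ?_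
    filter_upwards with k
    rw [hu_def, real_inner_smul_right]
    have := Set.mem_iInter.mp (hzC (φ k)) i
    exact mul_nonneg (inv_nonneg.mpr (hzne _).le) this
  · have hlim : Tendsto (fun k => ⟪y (φ k), u (φ k)⟫) atTop (𝓝 ⟪w, u9⟫) :=
      Tendsto.inner hyw hconv
    refine le_of_tendsto_of_tendsto hlim tendsto_const_nhds ?_
    filter_upwards with k
    rw [hu_def, real_inner_smul_right]
    exact le_of_lt (mul_neg_of_pos_of_neg (inv_pos.mpr (hzne _)) (hyz (φ k)))


/-- Let `P = ⋂ᵢ {x : ⟪νᵢ,x⟫ ≥ cᵢ}` be a polyhedron in `ℝⁿ` with `0` in its interior,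
with asymptotic cone `C = ⋂ᵢ {x : ⟪νᵢ,x⟫ ≥ 0}`, and let `Λ` be the interior of the
dual cone `C^∨`. Then the weighted volume functional `F(v) = ∫_P e^{−⟪v,x⟫} dx` is a
proper map on `Λ`: it is continuous on `Λ` and the preimage of every compact subset of
`ℝ` is compact. -/
theorem stmt_14 (n r : ℕ) (ν : Fin r → EuclideanSpace ℝ (Fin n)) (c : Fin r → ℝ)
    (P C : Set (EuclideanSpace ℝ (Fin n)))
    (hP : P = ⋂ i, {x : EuclideanSpace ℝ (Fin n) | c i ≤ ⟪ν i, x⟫})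
    (hC : C = ⋂ i, {x : EuclideanSpace ℝ (Fin n) | 0 ≤ ⟪ν i, x⟫})
    (h0 : (0 : EuclideanSpace ℝ (Fin n)) ∈ interior P)
    (Λ : Set (EuclideanSpace ℝ (Fin n)))
    (hΛ : Λ = interior {y : EuclideanSpace ℝ (Fin n) | ∀ x ∈ C, 0 ≤ ⟪y, x⟫})
    (F : EuclideanSpace ℝ (Fin n) → ℝ)
    (hF : ∀ v, F v = ∫ x in P, Real.exp (-⟪v, x⟫)) :
    ContinuousOn F Λ ∧ ∀ K : Set ℝ, IsCompact K → IsCompact {v ∈ Λ | F v ∈ K} := by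
  have hFdef : F = fun v => ∫ x in P, Real.exp (-⟪v, x⟫) := funext hF
  have hPclosed : IsClosed P := by
    rw [hP]
    exact isClosed_iInter fun i =>
      isClosed_le continuous_const (Continuous.inner continuous_const continuous_id)
  have hPmeas : MeasurableSet P := hPclosed.measurableSet
  obtain ⟨ε, hε, hball⟩ : ∃ ε > 0, ball (0 : EuclideanSpace ℝ (Fin n)) ε ⊆ P := by
    rw [mem_interior_iff_mem_nhds] at h0
    exact Metric.mem_nhds_iff.mp h0
  have hPC : ∀ p ∈ P, ∀ q ∈ C, p + q ∈ P := by
    intro p hp q hq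
    rw [hP] at hp ⊢
    rw [hC] at hq
    rw [Set.mem_iInter] at hp hq ⊢
    intro i
    have h1 := hp i
    have h2 := hq i
    simp only [Set.mem_setOf_eq, inner_add_right] at *
    linarith
  have hcoer : ∀ v ∈ Λ, ∃ δ : ℝ, 0 < δ ∧ ∃ M : ℝ, ∀ x ∈ P, δ * ‖x‖ - M ≤ ⟪v, x⟫ := by
    intro v hv
    rw [hΛ] at hv
    simp only [hC] at hv
    obtain ⟨δ, hδ, M, hM⟩ := aux_coercive ν c hv
    exact ⟨δ, hδ, M, by rw [hP]; exact hM⟩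
  have hmeasInt : ∀ v : EuclideanSpace ℝ (Fin n),
      AEStronglyMeasurable (fun x : EuclideanSpace ℝ (Fin n) => Real.exp (-⟪v, x⟫))
        (volume.restrict P) := fun v =>
    (Real.continuous_exp.comp
      ((Continuous.inner continuous_const continuous_id).neg)).aestronglyMeasurable.restrict
  have hIntOn : ∀ (v : EuclideanSpace ℝ (Fin n)) (δ M : ℝ), 0 < δ →
      (∀ x ∈ P, δ * ‖x‖ - M ≤ ⟪v, x⟫) →
      IntegrableOn (fun x => Real.exp (-⟪v, x⟫)) P := by
    intro v δ M hδ hbd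
    refine Integrable.mono'
      (((aux_integrable_exp_neg_norm n hδ).const_mul (Real.exp M)).restrict) (hmeasInt v) ?_
    rw [ae_restrict_iff' hPmeas]
    filter_upwards with x hx
    rw [Real.norm_eq_abs, abs_of_pos (Real.exp_pos _), ← Real.exp_add]
    apply Real.exp_le_exp.mpr
    have := hbd x hx
    linarith
  have hIO : ∀ v ∈ Λ, IntegrableOn (fun x => Real.exp (-⟪v, x⟫)) P := by
    intro v hv
    obtain ⟨δ, hδ, M, hbd⟩ := hcoer v hv
    exact hIntOn v δ M hδ hbd
  have hFcont : ∀ v ∈ Λ, ContinuousAt F v := by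
    intro v₀ hv₀
    obtain ⟨δ, hδ, M, hbd⟩ := hcoer v₀ hv₀
    rw [hFdef]
    apply continuousAt_of_dominated
      (bound := fun x => Real.exp M * Real.exp (-(δ/2 * ‖x‖)))
    · filter_upwards with v using hmeasInt v
    · filter_upwards [ball_mem_nhds v₀ (by positivity : (0:ℝ) < δ/2)] with v hv
      rw [ae_restrict_iff' hPmeas]
      filter_upwards with x hx
      rw [Real.norm_eq_abs, abs_of_pos (Real.exp_pos _), ← Real.exp_add]
      apply Real.exp_le_exp.mpr
      have h1 := hbd x hx
      have h2 := abs_le.mp (abs_real_inner_le_norm (v - v₀) x)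
      have h3 : ‖v - v₀‖ < δ/2 := by rwa [mem_ball_iff_norm] at hv
      have h4 : ⟪v, x⟫ = ⟪v₀, x⟫ + ⟪v - v₀, x⟫ := by
        rw [← inner_add_left]
        congr 1
        abel
      have h5 : ‖v - v₀‖ * ‖x‖ ≤ δ/2 * ‖x‖ :=
        mul_le_mul_of_nonneg_right h3.le (norm_nonneg x)
      linarith
    · exact ((aux_integrable_exp_neg_norm n (by positivity : (0:ℝ) < δ/2)).const_mul
        (Real.exp M)).restrict
    · filter_upwards with x
      exact (Real.continuous_exp.comp
        ((Continuous.inner continuous_id continuous_const).neg)).continuousAt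
  set vol4 : ℝ := (volume (ball (0 : EuclideanSpace ℝ (Fin n)) (ε/4))).toReal with hvol4
  have hvol4pos : 0 < vol4 := by
    rw [hvol4]
    exact ENNReal.toReal_pos (Metric.measure_ball_pos volume _ (by positivity)).ne'
      measure_ball_lt_top.ne
  have hgrow : ∀ v ∈ Λ, vol4 * Real.exp (ε/4 * ‖v‖) ≤ F v := by
    intro v hv
    set x₀ : EuclideanSpace ℝ (Fin n) := (-(ε/2) * ‖v‖⁻¹) • v with hx₀
    have hx₀norm : ‖x₀‖ ≤ ε/2 := by
      rw [hx₀, norm_smul, Real.norm_eq_abs]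
      rcases eq_or_ne v 0 with h | h
      · simp [h]
        linarith
      · have hn : 0 < ‖v‖ := norm_pos_iff.mpr h
        have h1 : |(-(ε/2) * ‖v‖⁻¹)| = (ε/2) * ‖v‖⁻¹ := by
          rw [abs_of_nonpos (by nlinarith [inv_pos.mpr hn])]
          ring
        rw [h1]
        rw [mul_assoc, inv_mul_cancel₀ hn.ne']
        linarith
    have hx₀inner : ⟪v, x₀⟫ = -(ε/2) * ‖v‖ := by
      rw [hx₀, real_inner_smul_right, real_inner_self_eq_norm_mul_norm]
      rcases eq_or_ne v 0 with h | h
      · simp [h]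
      · have hn : ‖v‖ ≠ 0 := norm_ne_zero_iff.mpr h
        field_simp
    have hsub : ball x₀ (ε/4) ⊆ P := by
      intro z hz
      apply hball
      rw [mem_ball] at hz
      rw [mem_ball, dist_zero_right]
      have h2 : dist z 0 ≤ dist z x₀ + dist x₀ 0 := dist_triangle _ _ _
      simp only [dist_zero_right] at h2
      have h3 : ‖x₀‖ ≤ ε/2 := hx₀norm
      calc ‖z‖ ≤ dist z x₀ + ‖x₀‖ := h2
        _ < ε/4 + ε/2 := by linarith
        _ < ε := by linarith
    have hconstle : ∀ z ∈ ball x₀ (ε/4), Real.exp (ε/4 * ‖v‖) ≤ Real.exp (-⟪v, z⟫) := by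
      intro z hz
      apply Real.exp_le_exp.mpr
      have h4 : ⟪v, z⟫ = ⟪v, x₀⟫ + ⟪v, z - x₀⟫ := by
        rw [← inner_add_right]
        congr 1
        abel
      have h5 := abs_le.mp (abs_real_inner_le_norm v (z - x₀))
      have h6 : ‖z - x₀‖ < ε/4 := by rwa [mem_ball_iff_norm] at hz
      have h7 : ‖v‖ * ‖z - x₀‖ ≤ ‖v‖ * (ε/4) := mul_le_mul_of_nonneg_left h6.le (norm_nonneg v)
      rw [hx₀inner] at h4
      nlinarith [norm_nonneg v]
    have step1 : Real.exp (ε/4 * ‖v‖) * (volume (ball x₀ (ε/4))).toReal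
        ≤ ∫ z in ball x₀ (ε/4), Real.exp (-⟪v, z⟫) :=
      setIntegral_ge_of_const_le_real measurableSet_ball measure_ball_lt_top.ne hconstle
        ((hIO v hv).mono_set hsub)
    have step2 : (∫ z in ball x₀ (ε/4), Real.exp (-⟪v, z⟫)) ≤ ∫ z in P, Real.exp (-⟪v, z⟫) :=
      setIntegral_mono_set (hIO v hv) (Filter.Eventually.of_forall fun z => (Real.exp_pos _).le)
        (HasSubset.Subset.eventuallyLE hsub)
    rw [hF v]
    calc vol4 * Real.exp (ε/4 * ‖v‖)
        = Real.exp (ε/4 * ‖v‖) * (volume (ball x₀ (ε/4))).toReal := by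
          rw [Measure.addHaar_ball_center volume x₀, hvol4]; ring
      _ ≤ _ := step1.trans step2
  constructor
  · exact fun v hv => (hFcont v hv).continuousWithinAt
  · intro K hK
    obtain ⟨b, hb⟩ := hK.bddAbove
    have hFb : ∀ v, v ∈ {v ∈ Λ | F v ∈ K} → F v ≤ b := fun v hv => hb hv.2
    apply isCompact_of_isClosed_isBounded
    · -- closedness
      apply IsSeqClosed.isClosed
      intro vs v9 hvs hlim
      have hmemΛ : ∀ k, vs k ∈ Λ := fun k => (hvs k).1
      have hv9Λ : v9 ∈ Λ := by
        by_contra hnot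
        have hnot' : v9 ∉ interior {y : EuclideanSpace ℝ (Fin n) |
            ∀ x ∈ ⋂ i, {x : EuclideanSpace ℝ (Fin n) | 0 ≤ ⟪ν i, x⟫}, 0 ≤ ⟪y, x⟫} := by
          rw [hΛ] at hnot
          simpa only [hC] using hnot
        obtain ⟨u, huC, hu1, huv⟩ := aux_boundary ν hnot'
        set vol2 : ℝ := (volume (ball (0 : EuclideanSpace ℝ (Fin n)) (ε/2))).toReal with hvol2
        have hvol2pos : 0 < vol2 := by
          rw [hvol2]
          exact ENNReal.toReal_pos (Metric.measure_ball_pos volume _ (by positivity)).ne'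
            measure_ball_lt_top.ne
        set ctr : ℕ → EuclideanSpace ℝ (Fin n) := fun j => ((2*ε)*(j:ℝ)) • u with hctr
        have hctrC : ∀ j : ℕ, ctr j ∈ C := by
          intro j
          rw [hC, Set.mem_iInter]
          intro i
          have h1 := Set.mem_iInter.mp huC i
          rw [Set.mem_setOf_eq, hctr, real_inner_smul_right]
          exact mul_nonneg (by positivity) h1
        have hBP : ∀ j : ℕ, ball (ctr j) (ε/2) ⊆ P := by
          intro j z hz
          have h1 : z - ctr j ∈ ball (0 : EuclideanSpace ℝ (Fin n)) ε := by
            rw [mem_ball_zero_iff]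
            rw [mem_ball_iff_norm] at hz
            linarith
          have h2 := hPC _ (hball h1) _ (hctrC j)
          simpa using h2
        have hdisj : ∀ j j' : ℕ, j ≠ j' →
            Disjoint (ball (ctr j) (ε/2)) (ball (ctr j') (ε/2)) := by
          intro j j' hne
          apply ball_disjoint_ball
          rw [dist_eq_norm, hctr]
          have h1 : ((2*ε)*(j:ℝ)) • u - ((2*ε)*(j':ℝ)) • u
              = (((2*ε)*(j:ℝ)) - ((2*ε)*(j':ℝ))) • u := (sub_smul _ _ _).symm
          rw [h1, norm_smul, hu1, mul_one, Real.norm_eq_abs]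
          have h2 : |(2*ε)*(j:ℝ) - (2*ε)*(j':ℝ)| = 2*ε*|(j:ℝ) - (j':ℝ)| := by
            rw [← mul_sub, abs_mul, abs_of_pos (by positivity)]
          rw [h2]
          have h3 : (1:ℝ) ≤ |(j:ℝ) - (j':ℝ)| := by
            rw [le_abs]
            rcases hne.lt_or_gt with h | h
            · right
              have : (j:ℝ) + 1 ≤ (j':ℝ) := by exact_mod_cast h
              linarith
            · left
              have : (j':ℝ) + 1 ≤ (j:ℝ) := by exact_mod_cast h
              linarith
          nlinarith
        have key : ∀ N : ℕ, ((N:ℝ)+1) * (vol2 * Real.exp (-(ε/2 * ‖v9‖))) ≤ b := by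
          intro N
          set G : EuclideanSpace ℝ (Fin n) → ℝ := fun v =>
            ∑ j ∈ Finset.range (N+1),
              vol2 * Real.exp (-((2*ε*(j:ℝ)) * ⟪v, u⟫) - ε/2 * ‖v‖) with hG
          have hGcont : Continuous G := by
            apply continuous_finset_sum
            intro j _
            apply continuous_const.mul
            apply Real.continuous_exp.comp
            exact ((continuous_const.mul
              (Continuous.inner continuous_id continuous_const)).neg).sub
              (continuous_const.mul continuous_norm)
          have hGle : ∀ v ∈ Λ, G v ≤ F v := by
            intro v hv
            have hIOv := hIO v hv
            have hUsub : (⋃ j ∈ Finset.range (N+1), ball (ctr j) (ε/2)) ⊆ P := by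
              intro z hz
              simp only [Set.mem_iUnion] at hz
              obtain ⟨j, _, hj⟩ := hz
              exact hBP j hj
            have hsplit : (∫ z in ⋃ j ∈ Finset.range (N+1), ball (ctr j) (ε/2),
                Real.exp (-⟪v, z⟫))
                = ∑ j ∈ Finset.range (N+1), ∫ z in ball (ctr j) (ε/2), Real.exp (-⟪v, z⟫) := by
              apply integral_biUnion_finset
              · intro i _
                exact measurableSet_ball
              · intro i _ j _ hij
                exact hdisj i j hij
              · intro i _
                exact hIOv.mono_set (hBP i)
            have hterm : ∀ j ∈ Finset.range (N+1),
                vol2 * Real.exp (-((2*ε*(j:ℝ)) * ⟪v, u⟫) - ε/2 * ‖v‖)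
                ≤ ∫ z in ball (ctr j) (ε/2), Real.exp (-⟪v, z⟫) := by
              intro j _
              have hconstle : ∀ z ∈ ball (ctr j) (ε/2),
                  Real.exp (-((2*ε*(j:ℝ)) * ⟪v, u⟫) - ε/2 * ‖v‖) ≤ Real.exp (-⟪v, z⟫) := by
                intro z hz
                apply Real.exp_le_exp.mpr
                have h4 : ⟪v, z⟫ = ⟪v, ctr j⟫ + ⟪v, z - ctr j⟫ := by
                  rw [← inner_add_right]
                  congr 1
                  abel
                have hcv : ⟪v, ctr j⟫ = (2*ε*(j:ℝ)) * ⟪v, u⟫ := by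
                  rw [hctr, real_inner_smul_right]
                have h5 := abs_le.mp (abs_real_inner_le_norm v (z - ctr j))
                have h6 : ‖z - ctr j‖ < ε/2 := by rwa [mem_ball_iff_norm] at hz
                have h7 : ‖v‖ * ‖z - ctr j‖ ≤ ‖v‖ * (ε/2) :=
                  mul_le_mul_of_nonneg_left h6.le (norm_nonneg v)
                rw [hcv] at h4
                linarith
              have hstep := setIntegral_ge_of_const_le_real measurableSet_ball
                measure_ball_lt_top.ne hconstle (hIOv.mono_set (hBP j))
              calc vol2 * Real.exp (-((2*ε*(j:ℝ)) * ⟪v, u⟫) - ε/2 * ‖v‖)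
                  = Real.exp (-((2*ε*(j:ℝ)) * ⟪v, u⟫) - ε/2 * ‖v‖)
                    * (volume (ball (ctr j) (ε/2))).toReal := by
                    rw [Measure.addHaar_ball_center volume (ctr j), hvol2]; ring
                _ ≤ _ := hstep
            calc G v ≤ ∑ j ∈ Finset.range (N+1),
                  ∫ z in ball (ctr j) (ε/2), Real.exp (-⟪v, z⟫) := Finset.sum_le_sum hterm
              _ = ∫ z in ⋃ j ∈ Finset.range (N+1), ball (ctr j) (ε/2),
                  Real.exp (-⟪v, z⟫) := hsplit.symm
              _ ≤ ∫ z in P, Real.exp (-⟪v, z⟫) := setIntegral_mono_set hIOv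
                  (Filter.Eventually.of_forall fun z => (Real.exp_pos _).le)
                  (HasSubset.Subset.eventuallyLE hUsub)
              _ = F v := (hF v).symm
          have hGlim : Filter.Tendsto (fun k => G (vs k)) atTop (nhds (G v9)) :=
            (hGcont.continuousAt).tendsto.comp hlim
          have hGb : G v9 ≤ b := le_of_tendsto hGlim
            (Filter.Eventually.of_forall fun k =>
              (hGle (vs k) (hmemΛ k)).trans (hFb _ (hvs k)))
          refine le_trans ?_ hGb
          rw [hG]
          have hterm2 : ∀ j ∈ Finset.range (N+1),
              vol2 * Real.exp (-(ε/2 * ‖v9‖))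
              ≤ vol2 * Real.exp (-((2*ε*(j:ℝ)) * ⟪v9, u⟫) - ε/2 * ‖v9‖) := by
            intro j _
            apply mul_le_mul_of_nonneg_left _ hvol2pos.le
            apply Real.exp_le_exp.mpr
            have h8 : 0 ≤ -((2*ε*(j:ℝ)) * ⟪v9, u⟫) := by
              have h9 : (0:ℝ) ≤ 2*ε*(j:ℝ) := by positivity
              nlinarith
            linarith
          have hsum := Finset.sum_le_sum hterm2
          calc ((N:ℝ)+1) * (vol2 * Real.exp (-(ε/2 * ‖v9‖)))
              = ∑ _j ∈ Finset.range (N+1), vol2 * Real.exp (-(ε/2 * ‖v9‖)) := by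
                rw [Finset.sum_const, Finset.card_range, nsmul_eq_mul]
                push_cast
                ring
            _ ≤ _ := hsum
        have hapos : 0 < vol2 * Real.exp (-(ε/2 * ‖v9‖)) := by positivity
        obtain ⟨N, hN⟩ := exists_nat_gt (b / (vol2 * Real.exp (-(ε/2 * ‖v9‖))))
        have hkeyN := key N
        rw [div_lt_iff₀ hapos] at hN
        nlinarith
      have hFlim : Filter.Tendsto (fun k => F (vs k)) atTop (nhds (F v9)) :=
        (hFcont v9 hv9Λ).tendsto.comp hlim
      have hFK : F v9 ∈ K := hK.isClosed.mem_of_tendsto hFlim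
        (Filter.Eventually.of_forall fun k => (hvs k).2)
      exact ⟨hv9Λ, hFK⟩
    · -- boundedness
      rw [isBounded_iff_forall_norm_le]
      refine ⟨4/ε * Real.log (b/vol4), ?_⟩
      intro v hv
      have h1 := hgrow v hv.1
      have h2 := hFb v hv
      have h3 : Real.exp (ε/4 * ‖v‖) ≤ b / vol4 := by
        rw [le_div_iff₀ hvol4pos]
        linarith
      have h4 : 0 < b / vol4 := lt_of_lt_of_le (Real.exp_pos _) h3
      have h5 : ε/4 * ‖v‖ ≤ Real.log (b/vol4) := (Real.le_log_iff_exp_le h4).mpr h3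
      calc ‖v‖ = 4/ε * (ε/4 * ‖v‖) := by field_simp
        _ ≤ 4/ε * Real.log (b/vol4) := mul_le_mul_of_nonneg_left h5 (by positivity)
end
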